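/- arXiv:1003.3772 — 2 statements merged into one kernel-verified Lean document; each statement's English description precedes it below -/
import Mathlib

section
/- Let H be a normal subgroup of a finite group N (playing the role of N_G H with W = N/H). For g ∈ N, the element β^N_H([g]) ∈ Z_p[H^{ab}] is zero unless g ∈ H, and for g ∈ H it equals Σ_{x ∈ W} x⁻¹ḡx, the trace of ḡ under the W-action; in particular it lies in the image T_H of the trace map. -/
/- STATEMENT 3: `H` a normal subgroup of a finite group `N`, `W = N/H`.  For `g ∈ N`,
`β^N_H([g]) = 0` unless `g ∈ H`, and for `g ∈ H` it equals `Σ_{x ∈ W} x⁻¹ ḡ x`; in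
particular it lies in the image `T_H` of the trace map. -/

open scoped Classical

/-- Conjugation `h ↦ n⁻¹ h n` on a normal subgroup, as a hom `H →* H`. -/
def conjHom' {N : Type*} [Group N] (H : Subgroup N) [hH : H.Normal] (n : N) :
    ↥H →* ↥H where
  toFun h := ⟨n⁻¹ * h.1 * n, by simpa using hH.conj_mem h.1 h.2 n⁻¹⟩
  map_one' := by ext; simp
  map_mul' a b := by ext; simp; group

/-- The trace map `x ↦ Σ_{w ∈ W} w x w⁻¹` on `ℤ_p[H^{ab}]`, computed using a set
`TW` of coset representatives of `H` in `N`. -/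
noncomputable def traceMap {p : ℕ} [Fact p.Prime] {N : Type*} [Group N] (H : Subgroup N)
    [H.Normal] (TW : Finset N) (x : MonoidAlgebra ℤ_[p] (Abelianization ↥H)) :
    MonoidAlgebra ℤ_[p] (Abelianization ↥H) :=
  ∑ n ∈ TW, MonoidAlgebra.mapDomain (Abelianization.map (conjHom' H n)) x

/-- `β^N_H([g])` computed with the transversal `T`. -/
noncomputable def bmap {p : ℕ} [Fact p.Prime] {N : Type*} [Group N]
    (H : Subgroup N) (T : Finset N) (g : N) : MonoidAlgebra ℤ_[p] (Abelianization ↥H) :=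
  ∑ x ∈ T, if h : x⁻¹ * g * x ∈ H then
    MonoidAlgebra.single (Abelianization.of (⟨x⁻¹ * g * x, h⟩ : ↥H)) (1 : ℤ_[p]) else 0

theorem stmt3 (p : ℕ) [Fact p.Prime] (N : Type*) [Group N] [Fintype N]
    (H : Subgroup N) [H.Normal] (g : N)
    (T : Finset N) (hT : ∀ n : N, ∃! x, x ∈ T ∧ x⁻¹ * n ∈ H) :
    (g ∉ H → bmap (p := p) H T g = 0) ∧
    (∀ hg : g ∈ H,
      bmap (p := p) H T g =
        ∑ x ∈ T, MonoidAlgebra.single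
          (Abelianization.of (conjHom' H x (⟨g, hg⟩ : ↥H))) (1 : ℤ_[p])) ∧
    bmap (p := p) H T g ∈ Set.range (traceMap (p := p) H T) := by

  have hN : H.Normal := ‹H.Normal›
  have hmem : ∀ x : N, (x⁻¹ * g * x ∈ H ↔ g ∈ H) := by
    intro x
    constructor
    · intro h
      have := hN.conj_mem _ h x
      simpa [mul_assoc] using this
    · intro h
      simpa using hN.conj_mem _ h x⁻¹
  have h1 : g ∉ H → bmap (p := p) H T g = 0 := by
    intro hg
    unfold bmap
    apply Finset.sum_eq_zero
    intro x _
    rw [dif_neg]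
    exact fun h => hg ((hmem x).mp h)
  have h2 : ∀ hg : g ∈ H,
      bmap (p := p) H T g =
        ∑ x ∈ T, MonoidAlgebra.single
          (Abelianization.of (conjHom' H x (⟨g, hg⟩ : ↥H))) (1 : ℤ_[p]) := by
    intro hg
    unfold bmap
    apply Finset.sum_congr rfl
    intro x _
    rw [dif_pos ((hmem x).mpr hg)]
    rfl
  refine ⟨h1, h2, ?_⟩
  by_cases hg : g ∈ H
  · refine ⟨MonoidAlgebra.single (Abelianization.of (⟨g, hg⟩ : ↥H)) (1 : ℤ_[p]), ?_⟩
    rw [h2 hg]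
    unfold traceMap
    apply Finset.sum_congr rfl
    intro x _
    rw [MonoidAlgebra.mapDomain_single, Abelianization.map_of]
  · exact ⟨0, by simp [traceMap, h1 hg]⟩
end

section
/- Let G be a finite p-group. Suppose (a_H)_{H ≤ G} is a family with a_H ∈ Z_p[H^{ab}] satisfying: (A1) for all H ≤ H₁ ≤ G with [H₁,H₁] ≤ H, tr_{H,H₁}(a_{H₁}) = π_{H,H₁}(a_H). If a_P = 0 for every cyclic subgroup P ≤ G, then a_H = 0 for every subgroup H ≤ G. -/
/- STATEMENT 8: `G` a finite `p`-group.  If a family `(a_H)_{H ≤ G}`,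
`a_H ∈ ℤ_p[H^{ab}]`, satisfies (A1) `tr_{H,H₁}(a_{H₁}) = π_{H,H₁}(a_H)` whenever
`H ≤ H₁` and `[H₁,H₁] ≤ H`, and `a_P = 0` for every cyclic subgroup `P`, then
`a_H = 0` for every subgroup `H`. -/

open scoped Classical

/-- `H/[H₁,H₁]`, realised as the image of `H` in `H₁^{ab}`. -/
def Smap {G : Type*} [Group G] (H H₁ : Subgroup G) : Subgroup (Abelianization ↥H₁) :=
  Subgroup.map Abelianization.of (H.subgroupOf H₁)

/-- The trace map `tr_{H,H₁} : ℤ_p[H₁^{ab}] → ℤ_p[H/[H₁,H₁]]`. -/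
noncomputable def trMap {p : ℕ} [Fact p.Prime] {G : Type*} [Group G] (H H₁ : Subgroup G)
    (x : MonoidAlgebra ℤ_[p] (Abelianization ↥H₁)) : MonoidAlgebra ℤ_[p] ↥(Smap H H₁) :=
  MonoidAlgebra.ofCoeff (x.coeff.sum fun k c =>
    if hk : k ∈ Smap H H₁ then
      Finsupp.single (⟨k, hk⟩ : ↥(Smap H H₁)) ((H.relIndex H₁ : ℤ_[p]) * c)
    else 0)

/-- The natural map `H → H/[H₁,H₁]` (through the inclusion `H ≤ H₁`). -/
def toS {G : Type*} [Group G] (H H₁ : Subgroup G) (hle : H ≤ H₁) : ↥H →* ↥(Smap H H₁) :=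
  MonoidHom.codRestrict (Abelianization.of.comp (Subgroup.inclusion hle)) _
    (fun h => ⟨Subgroup.inclusion hle h, by simp [Subgroup.mem_subgroupOf], rfl⟩)

/-- `π_{H,H₁} : ℤ_p[H^{ab}] → ℤ_p[H/[H₁,H₁]]`. -/
noncomputable def piMap {p : ℕ} [Fact p.Prime] {G : Type*} [Group G] (H H₁ : Subgroup G)
    (hle : H ≤ H₁) (x : MonoidAlgebra ℤ_[p] (Abelianization ↥H)) :
    MonoidAlgebra ℤ_[p] ↥(Smap H H₁) :=
  MonoidAlgebra.ofCoeff (Finsupp.mapDomain (Abelianization.lift (toS H H₁ hle)) x.coeff)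

open scoped commutatorElement in
lemma aux_commutator_le_coatom {G : Type*} [Group G] [Finite G]
    [Group.IsNilpotent G] {M : Subgroup G} (hM : IsCoatom M) : commutator G ≤ M := by
  haveI hMn : M.Normal :=
    Subgroup.NormalizerCondition.normal_of_coatom M normalizerCondition_of_isNilpotent hM
  have hsub : ∀ S : Subgroup (G ⧸ M), S = ⊥ ∨ S = ⊤ := by
    intro S
    have h1 : M ≤ S.comap (QuotientGroup.mk' M) := fun x hx => by
      have hx1 : QuotientGroup.mk' M x = 1 := (QuotientGroup.eq_one_iff x).2 hx
      simp [Subgroup.mem_comap, hx1, one_mem]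
    rcases h1.eq_or_lt with heq | hlt
    · left
      have := Subgroup.map_comap_eq_self_of_surjective
        (QuotientGroup.mk'_surjective M) S
      rw [← this, ← heq]
      rw [eq_bot_iff, Subgroup.map_le_iff_le_comap]
      intro x hx
      simp only [Subgroup.mem_comap, Subgroup.mem_bot]
      exact (QuotientGroup.eq_one_iff x).2 hx
    · right
      have h2 : S.comap (QuotientGroup.mk' M) = ⊤ := hM.2 _ hlt
      have := Subgroup.map_comap_eq_self_of_surjective
        (QuotientGroup.mk'_surjective M) S
      rw [← this, h2, ← MonoidHom.range_eq_map,
        MonoidHom.range_eq_top_of_surjective _ (QuotientGroup.mk'_surjective M)]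
  have hQcyc : IsCyclic (G ⧸ M) := by
    rcases subsingleton_or_nontrivial (G ⧸ M) with h | h
    · exact ⟨⟨1, fun x => show x ∈ Subgroup.zpowers 1 by
        rw [Subsingleton.elim x 1]; exact one_mem _⟩⟩
    · obtain ⟨q, hq⟩ := exists_ne (1 : G ⧸ M)
      have hzt := (hsub (Subgroup.zpowers q)).resolve_left (Subgroup.zpowers_ne_bot.2 hq)
      exact ⟨⟨q, fun x => show x ∈ Subgroup.zpowers q by rw [hzt]; trivial⟩⟩
  rw [_root_.commutator_def, Subgroup.commutator_le]
  intro g₁ _ g₂ _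
  have : QuotientGroup.mk' M ⁅g₁, g₂⁆ = 1 := by
    rw [map_commutatorElement]
    letI := hQcyc.commGroup
    exact commutatorElement_eq_one_iff_commute.2 (mul_comm _ _)
  rwa [← MonoidHom.mem_ker, QuotientGroup.ker_mk'] at this

lemma aux_cyclic_of_sup {G : Type*} [Group G] [Finite G] [Group.IsNilpotent G]
    (g : G) (h : Subgroup.zpowers g ⊔ commutator G = ⊤) : IsCyclic G := by
  have hcf : commutator G ≤ frattini G :=
    le_iInf₂ fun M hM => aux_commutator_le_coatom hM
  have h2 : Subgroup.zpowers g ⊔ frattini G = ⊤ :=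
    top_unique (h ▸ sup_le_sup_left hcf _)
  have h3 := frattini_nongenerating h2
  exact ⟨⟨g, fun x => show x ∈ Subgroup.zpowers g by rw [h3]; trivial⟩⟩

theorem stmt8 (p : ℕ) [Fact p.Prime] (G : Type*) [Group G] [Fintype G]
    (hG : IsPGroup p G)
    (a : ∀ H : Subgroup G, MonoidAlgebra ℤ_[p] (Abelianization ↥H))
    (hA1 : ∀ H H₁ : Subgroup G, ∀ hle : H ≤ H₁, ⁅H₁, H₁⁆ ≤ H →
      trMap (p := p) H H₁ (a H₁) = piMap (p := p) H H₁ hle (a H))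
    (hcyc : ∀ P : Subgroup G, IsCyclic ↥P → a P = 0) :
    ∀ H : Subgroup G, a H = 0 := by
  have main : ∀ n : ℕ, ∀ H : Subgroup G, Nat.card ↥H ≤ n → a H = 0 := by
    intro n
    induction n with
    | zero =>
      intro H hn
      exact absurd hn (by simpa using Nat.card_pos (α := ↥H))
    | succ n ih =>
      intro H hn
      by_cases hc : IsCyclic ↥H
      · exact hcyc H hc
      haveI : Group.IsNilpotent ↥H := (hG.to_subgroup H).isNilpotent
      refine MonoidAlgebra.ext (Finsupp.ext fun k => ?_)
      rw [MonoidAlgebra.coeff_zero, Finsupp.coe_zero, Pi.zero_apply]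
      obtain ⟨h', hh'⟩ : ∃ h' : ↥H, Abelianization.of h' = k := Quotient.exists_rep k
      set P : Subgroup G := Subgroup.zpowers (h' : G) ⊔ ⁅H, H⁆ with hPdef
      have hPH : P ≤ H := by
        refine sup_le (Subgroup.zpowers_le.2 h'.2) ?_
        rw [Subgroup.commutator_le]
        intro g₁ hg₁ g₂ hg₂
        rw [commutatorElement_def]
        exact H.mul_mem (H.mul_mem (H.mul_mem hg₁ hg₂) (H.inv_mem hg₁)) (H.inv_mem hg₂)
      have hPlt : P < H := by
        refine lt_of_le_of_ne hPH fun hPeq => hc ?_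
        apply aux_cyclic_of_sup (G := ↥H) h'
        apply Subgroup.map_injective (Subgroup.subtype_injective H)
        rw [Subgroup.map_sup, MonoidHom.map_zpowers, _root_.commutator_def,
          Subgroup.map_commutator, ← MonoidHom.range_eq_map, Subgroup.range_subtype]
        exact hPeq
      have hcard : Nat.card ↥P ≤ n := by
        have hss : (P : Set G) ⊂ (H : Set G) := SetLike.coe_ssubset_coe.2 hPlt
        have h1 : Nat.card ↥P = (P : Set G).ncard := Nat.card_coe_set_eq (P : Set G)
        have h2 : Nat.card ↥H = (H : Set G).ncard := Nat.card_coe_set_eq (H : Set G)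
        have hlt : Nat.card ↥P < Nat.card ↥H := by
          rw [h1, h2]; exact Set.ncard_lt_ncard hss (Set.toFinite _)
        omega
      have haP : a P = 0 := ih P hcard
      have htr : trMap (p := p) P H (a H) = 0 := by
        rw [hA1 P H hPH le_sup_right, haP, piMap, MonoidAlgebra.coeff_zero, Finsupp.mapDomain_zero]
        rfl
      have hmemP : (h' : G) ∈ P := Subgroup.mem_sup_left (Subgroup.mem_zpowers _)
      have hkmem : k ∈ Smap P H := ⟨h', Subgroup.mem_subgroupOf.2 hmemP, hh'⟩
      have heval : (trMap (p := p) P H (a H)).coeff (⟨k, hkmem⟩ : ↥(Smap P H)) = 0 := by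
        rw [htr]; rfl
      have hcomp : (trMap (p := p) P H (a H)).coeff (⟨k, hkmem⟩ : ↥(Smap P H))
          = (P.relIndex H : ℤ_[p]) * (a H).coeff k := by
        rw [trMap, MonoidAlgebra.coeff_ofCoeff, Finsupp.sum_apply, Finsupp.sum]
        rw [Finset.sum_eq_single k]
        · rw [dif_pos hkmem, Finsupp.single_eq_same]
        · intro b _ hne
          by_cases hbm : b ∈ Smap P H
          · rw [dif_pos hbm]
            exact Finsupp.single_eq_of_ne (by simpa [Subtype.ext_iff] using Ne.symm hne)
          · rw [dif_neg hbm, Finsupp.coe_zero, Pi.zero_apply]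
        · intro hk
          rw [Finsupp.notMem_support_iff.1 hk]
          by_cases hbm : k ∈ Smap P H
          · rw [dif_pos hbm, mul_zero, Finsupp.single_zero, Finsupp.coe_zero, Pi.zero_apply]
          · rw [dif_neg hbm, Finsupp.coe_zero, Pi.zero_apply]
      rw [hcomp] at heval
      have hrne : ((P.relIndex H : ℕ) : ℤ_[p]) ≠ 0 := by
        refine Nat.cast_ne_zero.2 ?_
        rw [Subgroup.relIndex]
        exact Subgroup.index_ne_zero_of_finite
      exact (mul_eq_zero.1 heval).resolve_left hrne
  exact fun H => main (Nat.card ↥H) H le_rfl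
end
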